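/- arXiv:0705.0482 — 2 statements merged into one kernel-verified Lean document; each statement's English description precedes it below -/
import Mathlib

section
/- If b > 1/2 and a ≠ 0, then there exists a constant c_b > 0 (independent of a and η) such that for every η ≠ 0, ∫_{-∞}^{∞} dx / (1 + |a| · |x² − η²|)^{2b} ≤ c_b / (|a| · |η|). -/
open MeasureTheory

theorem stmt_0 (b : ℝ) (hb : b > 1/2) :
    ∃ c > 0, ∀ a η : ℝ, a ≠ 0 → η ≠ 0 →
      (∫ x : ℝ, (1 + |a| * |x^2 - η^2|) ^ (-(2*b))) ≤ c / (|a| * |η|) := by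
  have h2b : (1:ℝ) < 2*b := by linarith
  have hexp : -(2*b) ≤ 0 := by linarith
  set F : ℝ → ℝ := fun v => (1 + |v|) ^ (-(2*b)) with hF
  have hFint : Integrable F := by
    have := integrable_one_add_norm (E := ℝ) (μ := volume) (r := 2*b) (by simpa using h2b)
    simpa [hF, Real.norm_eq_abs] using this
  have hFpos : ∀ v, 0 < F v := by
    intro v
    have : (0:ℝ) < 1 + |v| := by positivity
    exact Real.rpow_pos_of_pos this _
  set I := ∫ v : ℝ, F v with hI
  have hIpos : 0 < I := by
    rw [hI, integral_pos_iff_support_of_nonneg (fun v => (hFpos v).le) hFint]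
    have : Function.support F = Set.univ :=
      Set.eq_univ_of_forall fun v => Function.mem_support.2 (hFpos v).ne'
    rw [this]
    simp
  refine ⟨2*I, by linarith, ?_⟩
  intro a η ha hη
  set A := |a| with hAdef
  set t := |η| with htdef
  have hA : 0 < A := abs_pos.2 ha
  have ht : 0 < t := abs_pos.2 hη
  have hAt : 0 < A * t := mul_pos hA ht
  have hη2 : η^2 = t^2 := (sq_abs η).symm
  -- auxiliary monotone step
  have step : ∀ x s u : ℝ, x^2 - t^2 = s * u → t ≤ |u| →
      (1 + A * |x^2 - t^2|) ^ (-(2*b)) ≤ F (A*t*s) := by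
    intro x s u hsu hu
    apply Real.rpow_le_rpow_of_nonpos (by positivity) _ hexp
    have h1 : |A*t*s| = A*t*|s| := by
      rw [abs_mul, abs_of_nonneg hAt.le]
    rw [h1, hsu, abs_mul]
    have := mul_le_mul_of_nonneg_left hu (mul_nonneg hA.le (abs_nonneg s))
    nlinarith
  -- pointwise bound
  have hpt : ∀ x : ℝ, (1 + A * |x^2 - η^2|) ^ (-(2*b)) ≤ F (A*t*(x - t)) + F (A*t*(x + t)) := by
    intro x
    rw [hη2]
    rcases le_or_gt t |x + t| with h | h
    · have := step x (x - t) (x + t) (by ring) h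
      have h2 := (hFpos (A*t*(x + t))).le
      linarith
    · have hx : t ≤ |x - t| := by
        rcases abs_lt.1 h with ⟨h1, h2⟩
        rw [abs_of_nonpos (by linarith)]
        linarith
      have := step x (x + t) (x - t) (by ring) hx
      have h2 := (hFpos (A*t*(x - t))).le
      linarith
  -- integrability of shifted scaled functions
  have hg : Integrable (fun y : ℝ => F (A*t*y)) := hFint.comp_mul_left' hAt.ne'
  have hg1 : Integrable (fun x : ℝ => F (A*t*(x - t))) := hg.comp_sub_right t
  have hg2 : Integrable (fun x : ℝ => F (A*t*(x + t))) := hg.comp_add_right t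
  have hcont : Continuous fun x : ℝ => (1 + A * |x^2 - η^2|) ^ (-(2*b)) := by
    apply Continuous.rpow_const
    · fun_prop
    · intro x
      left
      positivity
  have hfin : Integrable (fun x : ℝ => (1 + A * |x^2 - η^2|) ^ (-(2*b))) := by
    refine (hg1.add hg2).mono hcont.aestronglyMeasurable (Filter.Eventually.of_forall fun x => ?_)
    have h1 : (0:ℝ) < 1 + A * |x^2 - η^2| := by positivity
    simp only [Pi.add_apply, Real.norm_eq_abs]
    rw [abs_of_nonneg (Real.rpow_nonneg h1.le _),
      abs_of_nonneg (by positivity : (0:ℝ) ≤ F (A*t*(x - t)) + F (A*t*(x + t)))]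
    exact hpt x
  -- compute the value of the comparison integral
  have hval : (∫ y : ℝ, F (A*t*y)) = (A*t)⁻¹ * I := by
    rw [MeasureTheory.Measure.integral_comp_mul_left F (A*t), abs_of_pos (inv_pos.2 hAt),
      smul_eq_mul, hI]
  have hmain : (∫ x : ℝ, (1 + A * |x^2 - η^2|) ^ (-(2*b))) ≤ 2 * ((A*t)⁻¹ * I) := by
    calc (∫ x : ℝ, (1 + A * |x^2 - η^2|) ^ (-(2*b)))
        ≤ ∫ x : ℝ, (F (A*t*(x - t)) + F (A*t*(x + t))) :=
          integral_mono hfin (hg1.add hg2) hpt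
      _ = (∫ x : ℝ, F (A*t*(x - t))) + ∫ x : ℝ, F (A*t*(x + t)) := integral_add hg1 hg2
      _ = 2 * ((A*t)⁻¹ * I) := by
          rw [integral_sub_right_eq_self (fun y : ℝ => F (A*t*y)) t,
            integral_add_right_eq_self (fun y : ℝ => F (A*t*y)) t, hval]
          ring
  calc (∫ x : ℝ, (1 + |a| * |x^2 - η^2|) ^ (-(2*b))) ≤ 2 * ((A*t)⁻¹ * I) := hmain
    _ = 2*I / (|a| * |η|) := by
        rw [← hAdef, ← htdef]
        field_simp
end

section
/- Let a, a₀, a₁ be real numbers with a₁ ≠ a₀. Then for all x, τ ∈ ℝ: (1 + |τ + a·x|) / ((1 + |τ + a₀·x|) + (1 + |τ + a₁·x|)) ≤ 1 + |a − a₀| / |a₁ − a₀|. -/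
theorem stmt_9 (a a₀ a₁ : ℝ) (h : a₁ ≠ a₀) (x τ : ℝ) :
    (1 + |τ + a*x|) / ((1 + |τ + a₀*x|) + (1 + |τ + a₁*x|)) ≤
      1 + |a - a₀| / |a₁ - a₀| := by
  have hd : (0:ℝ) < |a₁ - a₀| := abs_pos.mpr (sub_ne_zero.mpr h)
  set c := |a - a₀| / |a₁ - a₀| with hc
  have hc0 : 0 ≤ c := div_nonneg (abs_nonneg _) hd.le
  have hden : (0:ℝ) < (1 + |τ + a₀*x|) + (1 + |τ + a₁*x|) := by positivity
  rw [div_le_iff₀ hden]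
  have key : |(a - a₀)*x| = c * |(a₁ - a₀)*x| := by
    rw [abs_mul, abs_mul, hc]
    field_simp
  have h1 : |(a₁ - a₀)*x| ≤ |τ + a₀*x| + |τ + a₁*x| := by
    have he : (a₁ - a₀)*x = (τ + a₁*x) - (τ + a₀*x) := by ring
    rw [he]
    calc |(τ + a₁*x) - (τ + a₀*x)| ≤ |τ + a₁*x| + |τ + a₀*x| := abs_sub _ _
      _ = |τ + a₀*x| + |τ + a₁*x| := by ring
  have h2 : |τ + a*x| ≤ |τ + a₀*x| + c * (|τ + a₀*x| + |τ + a₁*x|) := by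
    have he : τ + a*x = (τ + a₀*x) + (a - a₀)*x := by ring
    calc |τ + a*x| ≤ |τ + a₀*x| + |(a - a₀)*x| := by rw [he]; exact abs_add_le _ _
      _ = |τ + a₀*x| + c * |(a₁ - a₀)*x| := by rw [key]
      _ ≤ |τ + a₀*x| + c * (|τ + a₀*x| + |τ + a₁*x|) := by
          exact add_le_add_right (mul_le_mul_of_nonneg_left h1 hc0) _
  nlinarith [abs_nonneg (τ + a₀*x), abs_nonneg (τ + a₁*x)]
end
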